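/- arXiv:2508.15613 — 2 statements merged into one kernel-verified Lean document; each statement's English description precedes it below -/
import Mathlib

section
/- Let x ↦ r_i(x) for i = 1,...,N be convex nonnegative functions on a convex set X ⊆ ℝⁿ, and suppose r_min^i ≤ r_i(x) ≤ r_max^i for all x ∈ X. Define o_i = 1 if r_min^i > ε², else 0; and w_i = (ε² - r_min^i)/(r_max^i - r_min^i) if r_max^i > ε² ≥ r_min^i (with r_max^i > r_min^i), w_i = 1 otherwise. Then the function x ↦ Σᵢ (1 - o_i)(w_i r_i(x) + (1 - w_i) r_min^i) + Σᵢ o_i ε² is convex on X and satisfies, for all x ∈ X: Σᵢ (1 - o_i)(w_i r_i(x) + (1 - w_i) r_min^i) + Σᵢ o_i ε² ≤ Σᵢ min(r_i(x), ε²). -/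
private lemma sum_convexOn {E : Type*} [AddCommGroup E] [Module ℝ E]
    {X : Set E} {ι : Type*} (t : Finset ι) (f : ι → E → ℝ)
    (hX : Convex ℝ X) (h : ∀ i ∈ t, ConvexOn ℝ X (f i)) :
    ConvexOn ℝ X (fun x => ∑ i ∈ t, f i x) := by
  classical
  induction t using Finset.cons_induction with
  | empty => simpa using convexOn_const 0 hX
  | cons a s ha ih =>
    simp only [Finset.sum_cons]
    exact (h a (Finset.mem_cons_self a s)).add
      (ih fun i hi => h i (Finset.mem_cons_of_mem hi))

theorem stmt_1 (n N : ℕ) (X : Set (EuclideanSpace ℝ (Fin n))) (hX : Convex ℝ X)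
    (r : Fin N → EuclideanSpace ℝ (Fin n) → ℝ)
    (hconv : ∀ i, ConvexOn ℝ X (r i))
    (hnonneg : ∀ i, ∀ x ∈ X, 0 ≤ r i x)
    (rmin rmax : Fin N → ℝ)
    (hbound : ∀ i, ∀ x ∈ X, rmin i ≤ r i x ∧ r i x ≤ rmax i)
    (ε : ℝ) (hε : 0 < ε)
    (o : Fin N → ℝ) (ho : ∀ i, o i = if rmin i > ε ^ 2 then 1 else 0)
    (w : Fin N → ℝ)
    (hw : ∀ i, w i = if rmax i > ε ^ 2 ∧ rmin i ≤ ε ^ 2 then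
      (ε ^ 2 - rmin i) / (rmax i - rmin i) else 1) :
    ConvexOn ℝ X (fun x =>
      (∑ i, (1 - o i) * (w i * r i x + (1 - w i) * rmin i)) + ∑ i, o i * ε ^ 2) ∧
    ∀ x ∈ X,
      (∑ i, (1 - o i) * (w i * r i x + (1 - w i) * rmin i)) + ∑ i, o i * ε ^ 2
        ≤ ∑ i, min (r i x) (ε ^ 2) := by
  have hc : ∀ i, 0 ≤ (1 - o i) * w i := by
    intro i
    rw [ho i, hw i]
    by_cases h1 : rmin i > ε ^ 2
    · simp [h1]
    · by_cases h2 : rmax i > ε ^ 2 ∧ rmin i ≤ ε ^ 2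
      · simp only [if_neg h1, if_pos h2, sub_zero, one_mul]
        apply div_nonneg
        · linarith [h2.2]
        · linarith [h2.1, h2.2]
      · simp [h1, h2]
  constructor
  · -- convexity
    have hrw : (fun x =>
        (∑ i, (1 - o i) * (w i * r i x + (1 - w i) * rmin i)) + ∑ i, o i * ε ^ 2)
        = fun x => (∑ i, (((1 - o i) * w i) * r i x
            + (1 - o i) * ((1 - w i) * rmin i))) + ∑ i, o i * ε ^ 2 := by
      funext x
      congr 1
      exact Finset.sum_congr rfl fun i _ => by ring
    rw [hrw]
    apply ConvexOn.add_const
    apply sum_convexOn _ _ hX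
    intro i _
    have := ((hconv i).smul (hc i)).add_const ((1 - o i) * ((1 - w i) * rmin i))
    exact this
  · -- bound
    intro x hx
    have key : ∀ i : Fin N,
        (1 - o i) * (w i * r i x + (1 - w i) * rmin i) + o i * ε ^ 2
          ≤ min (r i x) (ε ^ 2) := by
      intro i
      obtain ⟨hlo, hhi⟩ := hbound i x hx
      rw [ho i, hw i]
      by_cases h1 : rmin i > ε ^ 2
      · -- o = 1, term = ε², and r i x ≥ rmin > ε²
        simp only [if_pos h1, sub_self, zero_mul, one_mul, zero_add]
        rw [min_eq_right (by linarith)]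
      · by_cases h2 : rmax i > ε ^ 2 ∧ rmin i ≤ ε ^ 2
        · -- chord case
          simp only [if_neg h1, if_pos h2, sub_zero, one_mul, zero_mul, add_zero]
          set W := (ε ^ 2 - rmin i) / (rmax i - rmin i) with hW
          have hd : 0 < rmax i - rmin i := by linarith [h2.1, h2.2]
          have hW0 : 0 ≤ W := div_nonneg (by linarith [h2.2]) hd.le
          have hW1 : W ≤ 1 := by
            rw [hW, div_le_one hd]; linarith [h2.1]
          have hWm : W * (rmax i - rmin i) = ε ^ 2 - rmin i := by
            rw [hW, div_mul_cancel₀]; exact hd.ne'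
          apply le_min
          · nlinarith
          · nlinarith [mul_le_mul_of_nonneg_left (sub_le_sub_right hhi (rmin i)) hW0]
        · -- o = 0, w = 1, r i x ≤ rmax ≤ ε²
          push_neg at h1
          simp only [if_neg h1.not_gt, if_neg h2, sub_self, zero_mul, one_mul,
            sub_zero, add_zero, zero_add, mul_zero]
          have : ¬ rmax i > ε ^ 2 ∨ ¬ rmin i ≤ ε ^ 2 := by tauto
          have hmax : r i x ≤ ε ^ 2 := by
            rcases this with h | h
            · linarith [not_lt.mp h]
            · exact absurd h1 h
          rw [min_eq_left hmax]
    calc (∑ i, (1 - o i) * (w i * r i x + (1 - w i) * rmin i)) + ∑ i, o i * ε ^ 2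
        = ∑ i, ((1 - o i) * (w i * r i x + (1 - w i) * rmin i) + o i * ε ^ 2) := by
          rw [Finset.sum_add_distrib]
      _ ≤ ∑ i, min (r i x) (ε ^ 2) := Finset.sum_le_sum fun i _ => key i
end

section
/- Let p, q ∈ ℝ³ be nonzero, R_c ∈ SO(3), θ = arccos(pᵀR_cᵀq / (‖p‖‖q‖)), and n_r ≥ 0. For every R ∈ SO(3) with geodesic (angular) distance d∠(R, R_c) ≤ n_r, the value ‖Rp - q‖² lies in the interval [‖p‖² + ‖q‖² - 2‖p‖‖q‖cos(max(θ - n_r, 0)), ‖p‖² + ‖q‖² - 2‖p‖‖q‖cos(min(θ + n_r, π))]. -/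
open Matrix

noncomputable def enorm3 (v : Fin 3 → ℝ) : ℝ := Real.sqrt (∑ i, (v i) ^ 2)

def IsSO3 (R : Matrix (Fin 3) (Fin 3) ℝ) : Prop :=
  R ∈ Matrix.orthogonalGroup (Fin 3) ℝ ∧ R.det = 1

/-- geodesic (angular) distance between two rotations -/
noncomputable def rotDist (R Rc : Matrix (Fin 3) (Fin 3) ℝ) : ℝ :=
  Real.arccos ((Matrix.trace (Rcᵀ * R) - 1) / 2)

section Aux

lemma adj3 (M : Matrix (Fin 3) (Fin 3) ℝ) :
    M.adjugate = M*M - M.trace • M + ((M.trace^2 - (M*M).trace)/2) • 1 := by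
  ext i j
  fin_cases i <;> fin_cases j <;>
    simp [Matrix.adjugate_fin_three, Matrix.mul_apply, Matrix.trace_fin_three,
      Fin.sum_univ_three, Matrix.one_apply] <;> ring

lemma IsSO3.mul_transpose {S : Matrix (Fin 3) (Fin 3) ℝ} (h : IsSO3 S) : S * Sᵀ = 1 := by
  have := Matrix.mem_orthogonalGroup_iff (n := Fin 3) (R := ℝ) |>.mp h.1
  simpa using this

lemma IsSO3.transpose_mul {S : Matrix (Fin 3) (Fin 3) ℝ} (h : IsSO3 S) : Sᵀ * S = 1 := by
  have := Matrix.mem_orthogonalGroup_iff' (n := Fin 3) (R := ℝ) |>.mp h.1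
  simpa using this

lemma IsSO3.adjugate_eq {S : Matrix (Fin 3) (Fin 3) ℝ} (h : IsSO3 S) : S.adjugate = Sᵀ := by
  have h1 : S * S.adjugate = 1 := by rw [Matrix.mul_adjugate, h.2, one_smul]
  calc S.adjugate = 1 * S.adjugate := (one_mul _).symm
    _ = Sᵀ * (S * S.adjugate) := by rw [← h.transpose_mul, mul_assoc]
    _ = Sᵀ := by rw [h1, mul_one]

lemma IsSO3.sq_eq {S : Matrix (Fin 3) (Fin 3) ℝ} (h : IsSO3 S) :
    S * S = S.trace • S - S.trace • 1 + Sᵀ := by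
  have hadj : Sᵀ = S*S - S.trace • S + ((S.trace^2 - (S*S).trace)/2) • 1 := by
    rw [← h.adjugate_eq]; exact adj3 S
  have htr : (S.trace^2 - (S*S).trace)/2 = S.trace := by
    have h2 : Sᵀ.trace = S.trace := Matrix.trace_transpose S
    have h3 := congrArg Matrix.trace hadj
    simp only [Matrix.trace_add, Matrix.trace_sub, Matrix.trace_smul, Matrix.trace_one,
      smul_eq_mul, h2] at h3
    norm_num [Fintype.card_fin] at h3
    linarith
  rw [htr] at hadj
  linear_combination (norm := module) -hadj

lemma IsSO3.A_sq {S : Matrix (Fin 3) (Fin 3) ℝ} (h : IsSO3 S) :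
    (S + Sᵀ + (1 - S.trace) • 1) * (S + Sᵀ + (1 - S.trace) • 1)
      = (3 - S.trace) • (S + Sᵀ + (1 - S.trace) • 1) := by
  have h1 := h.mul_transpose
  have h2 := h.transpose_mul
  have h3 := h.sq_eq
  have h4 : Sᵀ * Sᵀ = S.trace • Sᵀ - S.trace • 1 + S := by
    have hT : IsSO3 Sᵀ := by
      constructor
      · rw [Matrix.mem_orthogonalGroup_iff]; simpa using h2
      · simpa using h.2
    simpa using hT.sq_eq
  simp only [add_mul, mul_add, smul_mul_assoc, mul_smul_comm, mul_one, one_mul,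
    h1, h2, h3, h4]
  module

lemma IsSO3.trace_le {S : Matrix (Fin 3) (Fin 3) ℝ} (h : IsSO3 S) : S.trace ≤ 3 := by
  have hd : ∀ i, S i i ≤ 1 := by
    intro i
    have h1 : (S * Sᵀ) i i = 1 := by rw [h.mul_transpose]; simp [Matrix.one_apply]
    rw [Matrix.mul_apply] at h1
    simp only [Matrix.transpose_apply] at h1
    nlinarith [Finset.single_le_sum (f := fun j => S i j * S i j)
      (fun j _ => mul_self_nonneg (S i j)) (Finset.mem_univ i), sq_nonneg (S i i - 1),
      sq_nonneg (S i i + 1)]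
  rw [Matrix.trace]
  calc ∑ i, S.diag i ≤ ∑ _i : Fin 3, (1:ℝ) := Finset.sum_le_sum fun i _ => hd i
    _ = 3 := by simp

lemma IsSO3.quad_ge {S : Matrix (Fin 3) (Fin 3) ℝ} (h : IsSO3 S) (v : Fin 3 → ℝ) :
    (S.trace - 1) * (v ⬝ᵥ v) ≤ 2 * (v ⬝ᵥ S.mulVec v) := by
  set A := S + Sᵀ + (1 - S.trace) • 1 with hA
  have hAT : Aᵀ = A := by
    simp [hA, Matrix.transpose_add, Matrix.transpose_smul, Matrix.transpose_one]
    abel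
  set w := A.mulVec v with hw
  have hww : w ⬝ᵥ w = (3 - S.trace) * (v ⬝ᵥ w) := by
    have h1 : A.mulVec w = (3 - S.trace) • w := by
      rw [hw, Matrix.mulVec_mulVec, h.A_sq, Matrix.smul_mulVec]
    calc w ⬝ᵥ w = w ⬝ᵥ A.mulVec v := rfl
      _ = A.vecMul w ⬝ᵥ v := by rw [Matrix.dotProduct_mulVec]
      _ = (Aᵀᵀ.vecMul w) ⬝ᵥ v := by rw [Matrix.transpose_transpose]
      _ = (Aᵀ.mulVec w) ⬝ᵥ v := by rw [Matrix.vecMul_transpose]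
      _ = (A.mulVec w) ⬝ᵥ v := by rw [hAT]
      _ = ((3 - S.trace) • w) ⬝ᵥ v := by rw [h1]
      _ = (3 - S.trace) * (w ⬝ᵥ v) := by rw [smul_dotProduct]; rfl
      _ = (3 - S.trace) * (v ⬝ᵥ w) := by rw [dotProduct_comm]
  have hvw : 0 ≤ v ⬝ᵥ w := by
    rcases lt_or_eq_of_le h.trace_le with ht | ht
    · have hnn : 0 ≤ w ⬝ᵥ w := Finset.sum_nonneg fun i _ => mul_self_nonneg _
      nlinarith
    · have : w ⬝ᵥ w = 0 := by rw [hww, ht]; ring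
      have hz : w = 0 := by
        funext i
        have := Finset.sum_eq_zero_iff_of_nonneg
          (f := fun i => w i * w i) (s := Finset.univ) (fun i _ => mul_self_nonneg _) |>.mp this
        have h2 := this i (Finset.mem_univ i)
        show w i = 0
        exact mul_self_eq_zero.mp h2
      simp [hz]
  have hexp : v ⬝ᵥ w = 2 * (v ⬝ᵥ S.mulVec v) + (1 - S.trace) * (v ⬝ᵥ v) := by
    have hST : v ⬝ᵥ Sᵀ.mulVec v = v ⬝ᵥ S.mulVec v := by
      rw [Matrix.dotProduct_mulVec, Matrix.vecMul_transpose, dotProduct_comm]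
    simp only [hw, hA, Matrix.add_mulVec, Matrix.smul_mulVec, Matrix.one_mulVec,
      dotProduct_add, dotProduct_smul, hST, smul_eq_mul]
    ring
  linarith [hexp ▸ hvw]

lemma cs_dot (v w : Fin 3 → ℝ) : (v ⬝ᵥ w)^2 ≤ (v ⬝ᵥ v) * (w ⬝ᵥ w) := by
  have := Finset.sum_mul_sq_le_sq_mul_sq Finset.univ v w
  simpa [dotProduct, pow_two] using this

lemma sph (x u q : Fin 3 → ℝ) (hx : x ⬝ᵥ x = 1) (hu : u ⬝ᵥ u = 1) (hq : q ⬝ᵥ q = 1) :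
    |x ⬝ᵥ q - (x ⬝ᵥ u) * (u ⬝ᵥ q)| ≤
      Real.sqrt (1 - (x ⬝ᵥ u)^2) * Real.sqrt (1 - (u ⬝ᵥ q)^2) := by
  set x' := x - (x ⬝ᵥ u) • u with hx'
  set q' := q - (q ⬝ᵥ u) • u with hq'
  have hcomm : ∀ a b : Fin 3 → ℝ, a ⬝ᵥ b = b ⬝ᵥ a := fun a b => dotProduct_comm a b
  have e1 : x' ⬝ᵥ q' = x ⬝ᵥ q - (x ⬝ᵥ u) * (u ⬝ᵥ q) := by
    simp only [hx', hq', sub_dotProduct, dotProduct_sub,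
      smul_dotProduct, dotProduct_smul, smul_eq_mul, hu]
    ring
  have e2 : x' ⬝ᵥ x' = 1 - (x ⬝ᵥ u)^2 := by
    simp only [hx', sub_dotProduct, dotProduct_sub,
      smul_dotProduct, dotProduct_smul, smul_eq_mul, hu, hx]
    rw [hcomm u x]; ring
  have e3 : q' ⬝ᵥ q' = 1 - (q ⬝ᵥ u)^2 := by
    simp only [hq', sub_dotProduct, dotProduct_sub,
      smul_dotProduct, dotProduct_smul, smul_eq_mul, hu, hq]
    rw [hcomm u q]; ring
  have hcs := cs_dot x' q'
  rw [e1, e2, e3] at hcs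
  have h2 : 0 ≤ 1 - (x ⬝ᵥ u)^2 := by
    rw [← e2]; exact Finset.sum_nonneg fun i _ => mul_self_nonneg _
  calc |x ⬝ᵥ q - (x ⬝ᵥ u) * (u ⬝ᵥ q)| = Real.sqrt ((x ⬝ᵥ q - (x ⬝ᵥ u) * (u ⬝ᵥ q))^2) :=
        (Real.sqrt_sq_eq_abs _).symm
    _ ≤ Real.sqrt ((1 - (x ⬝ᵥ u)^2) * (1 - (u ⬝ᵥ q)^2)) := by
        apply Real.sqrt_le_sqrt; rw [hcomm u q] at hcs ⊢; exact hcs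
    _ = Real.sqrt (1 - (x ⬝ᵥ u)^2) * Real.sqrt (1 - (u ⬝ᵥ q)^2) := Real.sqrt_mul h2 _

lemma arccos_anti {x y : ℝ} (h : x ≤ y) : Real.arccos y ≤ Real.arccos x := by
  simp only [Real.arccos_eq_pi_div_two_sub_arcsin]
  linarith [Real.monotone_arcsin h]

lemma enorm3_sq (v : Fin 3 → ℝ) : enorm3 v ^ 2 = v ⬝ᵥ v := by
  rw [enorm3, Real.sq_sqrt (Finset.sum_nonneg fun i _ => sq_nonneg _)]
  simp [dotProduct, pow_two]

lemma enorm3_pos {v : Fin 3 → ℝ} (h : v ≠ 0) : 0 < enorm3 v := by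
  apply Real.sqrt_pos.mpr
  obtain ⟨i, hi⟩ := Function.ne_iff.mp h
  have : (0:ℝ) < v i ^ 2 := (sq_nonneg (v i)).lt_of_ne (Ne.symm (pow_ne_zero 2 hi))
  exact this.trans_le (Finset.single_le_sum (f := fun j => v j ^ 2)
    (fun j _ => sq_nonneg _) (Finset.mem_univ i))

lemma dot_mulVec_mulVec {M : Matrix (Fin 3) (Fin 3) ℝ} (h : IsSO3 M) (v w : Fin 3 → ℝ) :
    (M.mulVec v) ⬝ᵥ (M.mulVec w) = v ⬝ᵥ w := by
  rw [Matrix.dotProduct_mulVec]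
  rw [show (M *ᵥ v) ᵥ* M = v ᵥ* (Mᵀ * M) from by
    rw [← Matrix.vecMul_vecMul, Matrix.vecMul_transpose]]
  rw [h.transpose_mul, Matrix.vecMul_one]

end Aux

set_option maxHeartbeats 1000000 in
theorem stmt_4 (p q : Fin 3 → ℝ) (hp : p ≠ 0) (hq : q ≠ 0)
    (Rc : Matrix (Fin 3) (Fin 3) ℝ) (hRc : IsSO3 Rc) (n_r : ℝ) (hn : 0 ≤ n_r)
    (θ : ℝ) (hθ : θ = Real.arccos (p ⬝ᵥ (Rcᵀ.mulVec q) / (enorm3 p * enorm3 q))) :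
    ∀ R : Matrix (Fin 3) (Fin 3) ℝ, IsSO3 R → rotDist R Rc ≤ n_r →
      enorm3 (R.mulVec p - q) ^ 2 ∈ Set.Icc
        (enorm3 p ^ 2 + enorm3 q ^ 2 -
          2 * enorm3 p * enorm3 q * Real.cos (max (θ - n_r) 0))
        (enorm3 p ^ 2 + enorm3 q ^ 2 -
          2 * enorm3 p * enorm3 q * Real.cos (min (θ + n_r) Real.pi)) := by
  intro R hR hd
  set a := enorm3 p with hadef
  set b := enorm3 q with hbdef
  have ha : 0 < a := enorm3_pos hp
  have hb : 0 < b := enorm3_pos hq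
  set u := Rc.mulVec p with hu
  set x := R.mulVec p with hx
  have huu : u ⬝ᵥ u = a^2 := by rw [hu, dot_mulVec_mulVec hRc, ← enorm3_sq]
  have hxx : x ⬝ᵥ x = a^2 := by rw [hx, dot_mulVec_mulVec hR, ← enorm3_sq]
  have hqq : q ⬝ᵥ q = b^2 := (enorm3_sq q).symm
  set c0 := (u ⬝ᵥ q)/(a*b) with hc0def
  have hθ' : θ = Real.arccos c0 := by
    rw [hθ, hc0def, hu, Matrix.dotProduct_mulVec, Matrix.vecMul_transpose]
  have hc0sq : c0^2 ≤ 1 := by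
    have hcs := cs_dot u q
    rw [huu, hqq] at hcs
    rw [hc0def, div_pow]
    rw [div_le_one (by positivity)]
    calc (u ⬝ᵥ q)^2 ≤ a^2 * b^2 := hcs
      _ = (a*b)^2 := by ring
  have hc0m : -1 ≤ c0 := by nlinarith [sq_nonneg (c0+1)]
  have hc0p : c0 ≤ 1 := by nlinarith [sq_nonneg (c0-1)]
  -- the relative rotation
  set S := R * Rcᵀ with hSdef
  have hS : IsSO3 S := by
    constructor
    · rw [Matrix.mem_orthogonalGroup_iff]
      show S * star S = 1
      have : star S = Rc * Rᵀ := by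
        simp [hSdef, Matrix.star_eq_conjTranspose, Matrix.transpose_mul]
      rw [this, hSdef, mul_assoc, ← mul_assoc Rcᵀ, hRc.transpose_mul, one_mul,
        hR.mul_transpose]
    · rw [hSdef, Matrix.det_mul, Matrix.det_transpose, hR.2, hRc.2, one_mul]
  have hSu : S.mulVec u = x := by
    rw [hSdef, hu, hx, Matrix.mulVec_mulVec, mul_assoc, hRc.transpose_mul, mul_one]
  set t := (Rcᵀ * R).trace with htdef
  have htS : S.trace = t := by rw [hSdef, htdef, Matrix.trace_mul_comm]
  set γ := (x ⬝ᵥ u)/(a^2) with hγdef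
  have hγsq : γ^2 ≤ 1 := by
    have hcs := cs_dot x u
    rw [huu, hxx] at hcs
    rw [hγdef, div_pow, div_le_one (by positivity)]
    calc (x ⬝ᵥ u)^2 ≤ a^2 * a^2 := hcs
      _ = (a^2)^2 := by ring
  have hγm : -1 ≤ γ := by nlinarith [sq_nonneg (γ+1)]
  have hγp : γ ≤ 1 := by nlinarith [sq_nonneg (γ-1)]
  have hγlb : (t-1)/2 ≤ γ := by
    have hquad := hS.quad_ge u
    rw [hSu, huu, htS] at hquad
    have hux : u ⬝ᵥ x = x ⬝ᵥ u := dotProduct_comm u x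
    rw [hux] at hquad
    rw [hγdef, le_div_iff₀ (by positivity)]
    nlinarith
  set β := Real.arccos γ with hβdef
  have hβn : β ≤ n_r := by
    have h1 : Real.arccos γ ≤ Real.arccos ((t-1)/2) := arccos_anti hγlb
    have h2 : rotDist R Rc = Real.arccos ((t-1)/2) := by rw [rotDist, htdef]
    rw [h2] at hd
    exact le_trans h1 hd
  have hβ0 : 0 ≤ β := Real.arccos_nonneg γ
  have hβπ : β ≤ Real.pi := Real.arccos_le_pi γ
  have hθ0 : 0 ≤ θ := by rw [hθ']; exact Real.arccos_nonneg c0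
  have hθπ : θ ≤ Real.pi := by rw [hθ']; exact Real.arccos_le_pi c0
  have hcosβ : Real.cos β = γ := Real.cos_arccos hγm hγp
  have hsinβ : Real.sin β = Real.sqrt (1 - γ^2) := Real.sin_arccos γ
  have hcosθ : Real.cos θ = c0 := by rw [hθ']; exact Real.cos_arccos hc0m hc0p
  have hsinθ : Real.sin θ = Real.sqrt (1 - c0^2) := by rw [hθ']; exact Real.sin_arccos c0
  set c1 := (x ⬝ᵥ q)/(a*b) with hc1def
  -- spherical inequality with normalized vectors
  have key : |c1 - γ * c0| ≤ Real.sqrt (1 - γ^2) * Real.sqrt (1 - c0^2) := by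
    have hh1 : (a⁻¹ • x) ⬝ᵥ (a⁻¹ • x) = 1 := by
      rw [smul_dotProduct, dotProduct_smul, smul_eq_mul, smul_eq_mul, hxx]
      rw [pow_two]
      field_simp
    have hh2 : (a⁻¹ • u) ⬝ᵥ (a⁻¹ • u) = 1 := by
      rw [smul_dotProduct, dotProduct_smul, smul_eq_mul, smul_eq_mul, huu]
      rw [pow_two]
      field_simp
    have hh3 : (b⁻¹ • q) ⬝ᵥ (b⁻¹ • q) = 1 := by
      rw [smul_dotProduct, dotProduct_smul, smul_eq_mul, smul_eq_mul, hqq]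
      rw [pow_two]
      field_simp
    have h1 := sph (a⁻¹ • x) (a⁻¹ • u) (b⁻¹ • q) hh1 hh2 hh3
    have e1 : (a⁻¹ • x) ⬝ᵥ (b⁻¹ • q) = c1 := by
      rw [smul_dotProduct, dotProduct_smul, smul_eq_mul, smul_eq_mul, hc1def]
      rw [div_eq_mul_inv, mul_inv]
      ring
    have e2 : (a⁻¹ • x) ⬝ᵥ (a⁻¹ • u) = γ := by
      rw [smul_dotProduct, dotProduct_smul, smul_eq_mul, smul_eq_mul, hγdef]
      rw [pow_two, div_eq_mul_inv, mul_inv]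
      ring
    have e3 : (a⁻¹ • u) ⬝ᵥ (b⁻¹ • q) = c0 := by
      rw [smul_dotProduct, dotProduct_smul, smul_eq_mul, smul_eq_mul, hc0def]
      rw [div_eq_mul_inv, mul_inv]
      ring
    rw [e1, e2, e3] at h1
    exact h1
  rw [abs_le] at key
  have hup : c1 ≤ Real.cos (θ - β) := by
    rw [Real.cos_sub, hcosθ, hcosβ, hsinθ, hsinβ]
    nlinarith [key.2]
  have hlo : Real.cos (θ + β) ≤ c1 := by
    rw [Real.cos_add, hcosθ, hcosβ, hsinθ, hsinβ]
    nlinarith [key.1]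
  -- compare with clamped bounds
  have hup' : c1 ≤ Real.cos (max (θ - n_r) 0) := by
    refine hup.trans ?_
    rw [← Real.cos_abs (θ - β)]
    apply Real.cos_le_cos_of_nonneg_of_le_pi (le_max_right _ _)
    · rw [abs_le]
      constructor <;> [linarith; linarith]
    · apply max_le
      · calc θ - n_r ≤ θ - β := by linarith
          _ ≤ |θ - β| := le_abs_self _
      · exact abs_nonneg _
  have hlo' : Real.cos (min (θ + n_r) Real.pi) ≤ c1 := by
    refine le_trans ?_ hlo
    by_cases hc : θ + β ≤ Real.pi
    · exact Real.cos_le_cos_of_nonneg_of_le_pi (by linarith) (min_le_right _ _)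
        (le_min (by linarith) hc)
    · rw [min_eq_right (by linarith)]
      rw [Real.cos_pi]
      exact Real.neg_one_le_cos _
  -- final algebra
  have hxq : x ⬝ᵥ q = a * b * c1 := by rw [hc1def]; field_simp
  have hnorm : enorm3 (x - q)^2 = a^2 + b^2 - 2*(x ⬝ᵥ q) := by
    rw [enorm3_sq]
    simp only [sub_dotProduct, dotProduct_sub]
    rw [hxx, hqq, dotProduct_comm q x]
    ring
  constructor
  · rw [hnorm, hxq]
    nlinarith [mul_pos ha hb, hup']
  · rw [hnorm, hxq]
    nlinarith [mul_pos ha hb, hlo']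
end
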